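/- Let n ≥ 2, let m ≤ n with n ≥ 5, n ≠ 4, and let H be a subgroup of S_m × S_n with both projections surjective, such that H acts transitively on {0,...,m-1} × {0,...,n-1}. Let H_1 = {h ∈ H : π_1(h) fixes both i and k} for distinct i, k ∈ {0,...,m-1}. Then π_2(H_1) is either A_n or S_n; in particular π_2(H_1) acts doubly transitively on {0,...,n-1}. -/

import Mathlib

open Equiv Equiv.Perm Function Nat

set_option linter.unusedSectionVars false
set_option maxHeartbeats 1000000
namespace Stmt9Aux

variable {β : Type*} [DecidableEq β] [Fintype β]

lemma swap_moved {a b z : β} (hab : a ≠ b) (hz : Equiv.swap a b z ≠ z) :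
    ∃ w, w ≠ z ∧ Equiv.swap a b = Equiv.swap z w := by
  rcases eq_or_ne z a with rfl | hza
  · exact ⟨b, fun h => hab h.symm, rfl⟩
  rcases eq_or_ne z b with rfl | hzb
  · exact ⟨a, fun h => hab h, Equiv.swap_comm a z⟩
  · exact absurd (Equiv.swap_apply_of_ne_of_ne hza hzb) hz

/-- Non-commuting permutations share a moved point. -/
lemma noncomm_share {s t : Perm β} (h : ¬ Commute s t) : ∃ z, s z ≠ z ∧ t z ≠ z := by
  by_contra hc
  push_neg at hc
  exact h (Equiv.Perm.Disjoint.commute (fun z => by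
    rcases eq_or_ne (s z) z with h1 | h1
    · exact Or.inl h1
    · exact Or.inr (hc z h1)))

lemma swap_eq_cases {a b c d : β} (hab : a ≠ b) (h : Equiv.swap a b = Equiv.swap c d) :
    (a = c ∧ b = d) ∨ (a = d ∧ b = c) := by
  have h1 : Equiv.swap c d a = b := by rw [← h]; exact Equiv.swap_apply_left a b
  rcases eq_or_ne a c with rfl | hac
  · rw [Equiv.swap_apply_left] at h1; exact Or.inl ⟨rfl, h1.symm⟩
  rcases eq_or_ne a d with rfl | had
  · rw [Equiv.swap_apply_right] at h1; exact Or.inr ⟨rfl, h1.symm⟩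
  · rw [Equiv.swap_apply_of_ne_of_ne hac had] at h1; exact absurd h1 hab

lemma exists_notin (s : Finset β) (h : s.card < Fintype.card β) : ∃ x, x ∉ s := by
  by_contra hc
  push_neg at hc
  have := Finset.card_le_card (fun x _ => hc x : Finset.univ ⊆ s)
  rw [Finset.card_univ] at this
  omega

lemma commutator_mem (K : Subgroup (Perm β))
    (hconj : ∀ σ ∈ K, ∀ τ : Perm β, τ * σ * τ⁻¹ ∈ K) {σ : Perm β} (hσK : σ ∈ K) (x y : β) :
    Equiv.swap (σ x) (σ y) * Equiv.swap x y ∈ K := by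
  have h1 : Equiv.swap x y * σ⁻¹ * (Equiv.swap x y)⁻¹ ∈ K := hconj σ⁻¹ (inv_mem hσK) _
  have h2 : Equiv.swap (σ x) (σ y) * Equiv.swap x y
      = σ * (Equiv.swap x y * σ⁻¹ * (Equiv.swap x y)⁻¹) := by
    rw [swap_apply_apply, Equiv.swap_inv]
    group
  rw [h2]
  exact mul_mem hσK h1

lemma exists_three_cycle_of_normal (h5 : 5 ≤ Fintype.card β) (K : Subgroup (Perm β))
    (hconj : ∀ σ ∈ K, ∀ τ : Perm β, τ * σ * τ⁻¹ ∈ K) {σ : Perm β} (hσK : σ ∈ K) (hσ : σ ≠ 1) :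
    ∃ ρ ∈ K, IsThreeCycle ρ := by
  have ⟨a, ha⟩ : ∃ a, σ a ≠ a := by
    by_contra hc; push_neg at hc; exact hσ (Equiv.ext hc)
  by_cases hcase : ∀ x, σ (σ x) = x
  · -- involution case
    have hσσa : σ (σ a) = a := hcase a
    obtain ⟨c, hc⟩ := exists_notin {a, σ a} (by
      have := Finset.card_insert_le a ({σ a} : Finset β)
      simp only [Finset.card_singleton] at this; omega)
    simp only [Finset.mem_insert, Finset.mem_singleton, not_or] at hc
    obtain ⟨hca, hcb⟩ := hc
    have hmem := commutator_mem K hconj hσK (σ a) c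
    rw [hσσa] at hmem
    by_cases hdc : σ c = c
    · rw [hdc] at hmem
      refine ⟨_, hmem, ?_⟩
      rw [Equiv.swap_comm a c, Equiv.swap_comm (σ a) c]
      exact isThreeCycle_swap_mul_swap_same hca hcb (Ne.symm ha)
    · -- d := σ c, d ∉ {a, σ a, c}
      have hda : σ c ≠ a := fun h => hcb (σ.injective (h.trans hσσa.symm))
      have hdb : σ c ≠ σ a := fun h => hca (σ.injective h)
      obtain ⟨e, he⟩ := exists_notin {a, σ a, c, σ c} (by
        have h1 := Finset.card_insert_le a ({σ a, c, σ c} : Finset β)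
        have h2 := Finset.card_insert_le (σ a) ({c, σ c} : Finset β)
        have h3 := Finset.card_insert_le c ({σ c} : Finset β)
        simp only [Finset.card_singleton] at h3; omega)
      simp only [Finset.mem_insert, Finset.mem_singleton, not_or] at he
      obtain ⟨hea, heb, hec, hed⟩ := he
      set ρ : Perm β := Equiv.swap a (σ c) * Equiv.swap (σ a) c with hρdef
      have hρK : ρ ∈ K := hmem
      have hρa : ρ a = σ c := by
        rw [hρdef, Perm.mul_apply, Equiv.swap_apply_of_ne_of_ne (Ne.symm ha) (Ne.symm hca),
          Equiv.swap_apply_left]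
      have hρe : ρ e = e := by
        rw [hρdef, Perm.mul_apply, Equiv.swap_apply_of_ne_of_ne heb hec,
          Equiv.swap_apply_of_ne_of_ne hea hed]
      have hmem2 := commutator_mem K hconj hρK a e
      rw [hρa, hρe] at hmem2
      refine ⟨_, hmem2, ?_⟩
      rw [Equiv.swap_comm (σ c) e, Equiv.swap_comm a e]
      exact isThreeCycle_swap_mul_swap_same hed hea hda
  · push_neg at hcase
    obtain ⟨x, h2⟩ := hcase
    have hx : σ x ≠ x := fun h => h2 (by rw [h, h])
    have hmem := commutator_mem K hconj hσK x (σ x)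
    refine ⟨_, hmem, ?_⟩
    rw [Equiv.swap_comm x (σ x)]
    exact isThreeCycle_swap_mul_swap_same (fun h => hx (σ.injective h).symm) hx h2

lemma alternating_le_of_normal (h5 : 5 ≤ Fintype.card β) (K : Subgroup (Perm β))
    (hconj : ∀ σ ∈ K, ∀ τ : Perm β, τ * σ * τ⁻¹ ∈ K) {σ : Perm β} (hσK : σ ∈ K) (hσ : σ ≠ 1) :
    alternatingGroup β ≤ K := by
  obtain ⟨ρ, hρK, hρ3⟩ := exists_three_cycle_of_normal h5 K hconj hσK hσ
  rw [← closure_three_cycles_eq_alternating]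
  refine (Subgroup.closure_le K).2 ?_
  intro τ hτ
  have hconjρτ : IsConj ρ τ :=
    isConj_iff_cycleType_eq.2 (hρ3.cycleType.trans (hτ.cycleType).symm)
  obtain ⟨c, hc⟩ := isConj_iff.1 hconjρτ
  exact hc ▸ hconj ρ hρK c

lemma eq_alt_or_top (M : Subgroup (Perm β)) (hM : alternatingGroup β ≤ M) :
    M = alternatingGroup β ∨ M = ⊤ := by
  by_cases h : M ≤ alternatingGroup β
  · exact Or.inl (le_antisymm h hM)
  · right
    rw [eq_top_iff]
    obtain ⟨x, hxM, hx⟩ := SetLike.not_le_iff_exists.1 h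
    intro g _
    by_cases hg : g ∈ alternatingGroup β
    · exact hM hg
    · have hsx : Perm.sign x = -1 := by
        rcases Int.units_eq_one_or (Perm.sign x) with h1 | h1
        · exact absurd (Perm.mem_alternatingGroup.2 h1) hx
        · exact h1
      have hsg : Perm.sign g = -1 := by
        rcases Int.units_eq_one_or (Perm.sign g) with h1 | h1
        · exact absurd (Perm.mem_alternatingGroup.2 h1) hg
        · exact h1
      have : g * x⁻¹ ∈ alternatingGroup β := by
        rw [Perm.mem_alternatingGroup, map_mul, map_inv, hsx, hsg]
        decide
      have := mul_mem (hM this) hxM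
      rwa [inv_mul_cancel_right] at this

lemma exists_even_map (h5 : 5 ≤ Fintype.card β) (a b c d : β) (hab : a ≠ b) (hcd : c ≠ d) :
    ∃ x ∈ alternatingGroup β, x a = c ∧ x b = d := by
  set u : Perm β := Equiv.swap a c with hu
  set b' := u b with hb'
  have hb'c : b' ≠ c := by
    rw [hb', hu]
    intro h
    exact hab (u.injective (h.trans (Equiv.swap_apply_left a c).symm)).symm
  set v : Perm β := if h : b' = d then 1 else Equiv.swap b' d with hv
  have hvc : v c = c := by
    rw [hv]
    split
    · rfl
    · exact Equiv.swap_apply_of_ne_of_ne (Ne.symm hb'c) hcd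
  have hvb' : v b' = d := by
    rw [hv]
    split
    · next h => rw [Perm.one_apply, h]
    · exact Equiv.swap_apply_left _ _
  set x0 : Perm β := v * u with hx0
  have hx0a : x0 a = c := by rw [hx0, Perm.mul_apply, hu, Equiv.swap_apply_left]; exact hvc
  have hx0b : x0 b = d := by rw [hx0, Perm.mul_apply]; exact hvb'
  by_cases hx0alt : x0 ∈ alternatingGroup β
  · exact ⟨x0, hx0alt, hx0a, hx0b⟩
  · obtain ⟨e, he⟩ := exists_notin {a, b} (by
      have := Finset.card_insert_le a ({b} : Finset β)
      simp only [Finset.card_singleton] at this; omega)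
    obtain ⟨f, hf⟩ := exists_notin {a, b, e} (by
      have h1 := Finset.card_insert_le a ({b, e} : Finset β)
      have h2 := Finset.card_insert_le b ({e} : Finset β)
      simp only [Finset.card_singleton] at h2; omega)
    simp only [Finset.mem_insert, Finset.mem_singleton, not_or] at he hf
    obtain ⟨hfa, hfb, hfe⟩ := hf
    refine ⟨x0 * Equiv.swap e f, ?_, ?_, ?_⟩
    · have hsx0 : Perm.sign x0 = -1 := by
        rcases Int.units_eq_one_or (Perm.sign x0) with h1 | h1
        · exact absurd (Perm.mem_alternatingGroup.2 h1) hx0alt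
        · exact h1
      rw [Perm.mem_alternatingGroup, map_mul, hsx0, Perm.sign_swap (fun h => hfe h.symm)]
      decide
    · rw [Perm.mul_apply, Equiv.swap_apply_of_ne_of_ne (fun h => he.1 h.symm) (Ne.symm hfa)]
      exact hx0a
    · rw [Perm.mul_apply, Equiv.swap_apply_of_ne_of_ne (fun h => he.2 h.symm) (Ne.symm hfb)]
      exact hx0b

lemma sub_le_arith : ∀ j, 3 ≤ j → 2^j * j ! ≤ 2 * (2*j-2)! := by
  intro j hj
  induction j, hj using Nat.le_induction with
  | base => norm_num [Nat.factorial]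
  | succ j hj ih =>
    have h1 : 2*(j+1)-2 = (2*j-2) + 1 + 1 := by omega
    rw [pow_succ, Nat.factorial_succ, h1, Nat.factorial_succ, Nat.factorial_succ]
    have h2 : 2*j-2+1+1 = 2*j := by omega
    have h3 : 2*j-2+1 = 2*j-1 := by omega
    rw [h2, h3]
    calc 2^j * 2 * ((j+1) * j !) = (2*(j+1)) * (2^j * j !) := by ring
    _ ≤ (2*j*(2*j-1)) * (2 * (2*j-2)!) := by
        apply Nat.mul_le_mul _ ih
        nlinarith
    _ = 2 * (2*j * ((2*j-1) * (2*j-2)!)) := by ring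

lemma sub_lt_arith : ∀ j, 4 ≤ j → 2^j * j ! < 2 * (2*j-2)! := by
  intro j hj
  induction j, hj using Nat.le_induction with
  | base => norm_num [Nat.factorial]
  | succ j hj ih =>
    have h1 : 2*(j+1)-2 = (2*j-2) + 1 + 1 := by omega
    rw [pow_succ, Nat.factorial_succ, h1, Nat.factorial_succ, Nat.factorial_succ]
    have h2 : 2*j-2+1+1 = 2*j := by omega
    have h3 : 2*j-2+1 = 2*j-1 := by omega
    rw [h2, h3]
    calc 2^j * 2 * ((j+1) * j !) = (2*(j+1)) * (2^j * j !) := by ring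
    _ < (2*j*(2*j-1)) * (2 * (2*j-2)!) := by
        exact Nat.mul_lt_mul_of_le_of_lt (by nlinarith) ih (by nlinarith)
    _ = 2 * (2*j * ((2*j-1) * (2*j-2)!)) := by ring

lemma le_arith : ∀ n j, 2 ≤ j → 2*j ≤ n → 5 ≤ n → 2^j * j ! * (n - 2*j)! ≤ 2 * (n-2)! := by
  intro n
  induction n with
  | zero => omega
  | succ n ih =>
    intro j hj hjn hn
    rcases Nat.lt_or_ge (2*j) (n+1) with hlt | hge
    · -- 2*j ≤ n
      have hjn' : 2*j ≤ n := by omega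
      rcases Nat.lt_or_ge n 5 with hn5 | hn5
      · -- n + 1 = 5, j = 2
        have hn4 : n = 4 := by omega
        have hj2 : j = 2 := by omega
        subst hn4; subst hj2
        norm_num [Nat.factorial]
      · have h1 : n + 1 - 2*j = (n - 2*j) + 1 := by omega
        have h2 : n + 1 - 2 = (n - 2) + 1 := by omega
        rw [h1, h2, Nat.factorial_succ, Nat.factorial_succ]
        calc 2^j * j ! * ((n - 2*j + 1) * (n-2*j)!)
            = (n - 2*j + 1) * (2^j * j ! * (n-2*j)!) := by ring
          _ ≤ (n - 2 + 1) * (2 * (n-2)!) := by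
              apply Nat.mul_le_mul _ (ih j hj hjn' hn5)
              omega
          _ = 2 * ((n-2+1) * (n-2)!) := by ring
    · -- 2*j = n+1
      have hj3 : 3 ≤ j := by omega
      have h0 : n + 1 - 2*j = 0 := by omega
      have h1 : n + 1 - 2 = 2*j - 2 := by omega
      rw [h0, h1, Nat.factorial_zero, Nat.mul_one]
      exact sub_le_arith j hj3

lemma lt_arith (n j : ℕ) (hj : 2 ≤ j) (hjn : 2*j ≤ n) (hn : 5 ≤ n) (hn6 : n ≠ 6) :
    2^j * j ! * (n - 2*j)! < 2 * (n-2)! := by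
  rcases Nat.lt_or_ge (2*j) n with hlt | hge
  · rcases Nat.lt_or_ge n 6 with hn5 | hn5
    · have hn' : n = 5 := by omega
      have hj2 : j = 2 := by omega
      subst hn'; subst hj2
      norm_num [Nat.factorial]
    · have h5 : 5 ≤ n - 1 := by omega
      have hjn' : 2*j ≤ n - 1 := by omega
      have := le_arith (n-1) j hj hjn' h5
      have h1 : n - 2*j = (n - 1 - 2*j) + 1 := by omega
      have h2 : n - 2 = (n - 1 - 2) + 1 := by omega
      rw [h1, h2, Nat.factorial_succ, Nat.factorial_succ]
      calc 2^j * j ! * ((n-1-2*j + 1) * (n-1-2*j)!)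
          = (n-1-2*j+1) * (2^j * j ! * (n-1-2*j)!) := by ring
        _ ≤ (n-1-2*j+1) * (2 * (n-1-2)!) := Nat.mul_le_mul_left _ this
        _ < (n-1-2+1) * (2 * (n-1-2)!) := by
            exact Nat.mul_lt_mul_of_lt_of_le (by omega) le_rfl (Nat.mul_pos two_pos (Nat.factorial_pos _))
        _ = 2 * ((n-1-2+1) * (n-1-2)!) := by ring
  · have hn2j : 2*j = n := by omega
    have hj4 : 4 ≤ j := by omega
    have h0 : n - 2*j = 0 := by omega
    rw [h0, Nat.factorial_zero, Nat.mul_one, ← hn2j]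
    have h1 : 2*j - 2 = n - 2 := by omega
    rw [hn2j, ← h1]
    exact sub_lt_arith j hj4
lemma card_commute_swap_ge (a b : β) (hab : a ≠ b) :
    2 * (Fintype.card β - 2)! ≤ Nat.card {x : Perm β // Commute x (Equiv.swap a b)} := by
  classical
  set t := Equiv.swap a b with ht
  set p : β → Prop := fun x => x ≠ a ∧ x ≠ b with hp
  have hpa : ¬ p a := by simp [hp]
  have hpb : ¬ p b := by simp [hp]
  have hcomm : ∀ σ : Perm (Subtype p), Commute (ofSubtype σ) t := by
    intro σ
    apply Equiv.Perm.Disjoint.commute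
    intro z
    by_cases hz : p z
    · exact Or.inr (Equiv.swap_apply_of_ne_of_ne hz.1 hz.2)
    · exact Or.inl (ofSubtype_apply_of_not_mem σ hz)
  set F : Perm (Subtype p) × Bool → {x : Perm β // Commute x t} :=
    fun sc => ⟨ofSubtype sc.1 * (if sc.2 then t else 1), by
      rcases sc with ⟨σ, c⟩
      cases c
      · simpa using hcomm σ
      · simpa using (hcomm σ).mul_left (Commute.refl t)⟩ with hF
  have hFval : ∀ sc, (F sc).1 = ofSubtype sc.1 * (if sc.2 then t else 1) := fun _ => rfl
  have hinj : Function.Injective F := by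
    rintro ⟨σ, c⟩ ⟨σ', c'⟩ hFeq
    have heq : ofSubtype σ * (if c then t else 1) = ofSubtype σ' * (if c' then t else 1) :=
      congrArg Subtype.val hFeq
    have hvala : ∀ (τ : Perm (Subtype p)) (c : Bool),
        (ofSubtype τ * (if c then t else 1)) a = (if c then b else a) := by
      intro τ c
      cases c
      · simp only [if_neg, Bool.false_eq_true, if_false, mul_one]
        exact ofSubtype_apply_of_not_mem τ hpa
      · simp only [if_true, Perm.mul_apply, ht, Equiv.swap_apply_left]
        exact ofSubtype_apply_of_not_mem τ hpb
    have hcc : c = c' := by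
      have hval := congrArg (fun (x : Perm β) => x a) heq
      rw [hvala σ c, hvala σ' c'] at hval
      cases c <;> cases c' <;> simp_all
    subst hcc
    have heq2 : ofSubtype σ = ofSubtype σ' := mul_right_cancel heq
    have : σ = σ' := by
      ext z
      have := congrArg (fun (x : Perm β) => x z.1) heq2
      simpa [ofSubtype_apply_of_mem] using this
    rw [this]
  have hcard := Nat.card_le_card_of_injective F hinj
  have hcards : Nat.card (Perm (Subtype p) × Bool) = (Fintype.card β - 2)! * 2 := by
    rw [Nat.card_eq_fintype_card, Fintype.card_prod, Fintype.card_perm, Fintype.card_bool]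
    congr 2
    rw [Fintype.card_subtype]
    have : Finset.filter p Finset.univ = Finset.univ \ {a, b} := by
      ext z
      simp [hp, Finset.mem_sdiff, and_comm]
    rw [this, Finset.card_sdiff_of_subset (Finset.subset_univ _), Finset.card_univ, Finset.card_pair hab]
  omega

section LO
variable [LinearOrder β]
lemma card_commute_invol_le (s : Perm β) (hs2 : s * s = 1) (hs1 : s ≠ 1) (hsw : ¬ IsSwap s) :
    ∃ j, 2 ≤ j ∧ 2*j ≤ Fintype.card β ∧
      Nat.card {x : Perm β // Commute x s} ≤ 2^j * j ! * (Fintype.card β - 2*j)! := by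
  classical
  have hss : ∀ z, s (s z) = z := fun z => by
    rw [← Perm.mul_apply, hs2, Perm.one_apply]
  set T : Finset β := s.support.filter (fun x => x < s x) with hT
  set j := T.card with hj
  have hmemT : ∀ z, z ∈ T ↔ (s z ≠ z ∧ z < s z) := by
    intro z; simp [hT, Perm.mem_support]
  -- support has cardinality 2 * j
  have himg : s.support.filter (fun x => ¬ x < s x) = T.image s := by
    ext z
    simp only [Finset.mem_filter, Finset.mem_image, Perm.mem_support]
    constructor
    · rintro ⟨hzs, hnlt⟩
      refine ⟨s z, ?_, hss z⟩
      rw [hmemT, hss]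
      exact ⟨fun h => hzs h.symm, lt_of_le_of_ne (not_lt.1 hnlt) hzs⟩
    · rintro ⟨y, hy, rfl⟩
      rw [hmemT] at hy
      rw [hss]
      exact ⟨fun h => hy.1 h.symm, not_lt.2 (le_of_lt hy.2)⟩
  have hsupp : s.support.card = 2 * j := by
    have hdisj : Disjoint T (T.image s) := by
      rw [Finset.disjoint_left]
      intro z hzT hzI
      rw [← himg] at hzI
      exact (Finset.mem_filter.1 hzI).2 (Finset.mem_filter.1 hzT).2
    have hunion : T ∪ T.image s = s.support := by
      rw [← himg, hT]
      exact Finset.filter_union_filter_not_eq _ _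
    have := Finset.card_union_of_disjoint hdisj
    rw [hunion, Finset.card_image_of_injective T s.injective] at this
    omega
  have hj2 : 2 ≤ j := by
    rcases Nat.lt_or_ge j 2 with h | h
    · exfalso
      have hj01 : j = 0 ∨ j = 1 := by omega
      rcases hj01 with h0 | h1
      · rw [h0, Nat.mul_zero, Finset.card_eq_zero] at hsupp
        exact hs1 (Equiv.Perm.support_eq_empty_iff.1 hsupp)
      · rw [h1, Nat.mul_one] at hsupp
        exact hsw (card_support_eq_two.1 hsupp)
    · exact h
  have hjn : 2*j ≤ Fintype.card β := hsupp ▸ (Finset.card_le_univ _).trans_eq Finset.card_univ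
  refine ⟨j, hj2, hjn, ?_⟩
  -- preliminary facts about commuting permutations
  have hcomm_apply : ∀ (x : Perm β), Commute x s → ∀ z, x (s z) = s (x z) := by
    intro x hx z
    rw [← Perm.mul_apply, hx.eq, Perm.mul_apply]
  have hfix_iff : ∀ (x : Perm β), Commute x s → ∀ z, s z = z ↔ s (x z) = x z := by
    intro x hx z
    constructor
    · intro h; rw [← hcomm_apply x hx z, h]
    · intro h
      have h2 := hcomm_apply x hx z
      rw [h] at h2
      exact x.injective h2
  have hmoveT : ∀ (x : Perm β), Commute x s → ∀ z, z ∈ T →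
      (if x z < s (x z) then x z else s (x z)) ∈ T := by
    intro x hx z hz
    rw [hmemT] at hz
    have hxz : s (x z) ≠ x z := fun h => hz.1 (x.injective ((hcomm_apply x hx z).trans h))
    split
    · next hlt => exact (hmemT _).2 ⟨hxz, hlt⟩
    · next hnlt =>
      rw [hmemT, hss]
      exact ⟨fun h => hxz h.symm, lt_of_le_of_ne (not_lt.1 hnlt) hxz⟩
  -- the injection
  set G : {x : Perm β // Commute x s} →
      Perm {z : β // s z = z} × Perm {z : β // z ∈ T} × ({z : β // z ∈ T} → Bool) := fun xc =>
    ⟨Equiv.Perm.subtypePerm xc.1 (fun z => (hfix_iff xc.1 xc.2 z).symm),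
     Equiv.ofBijective (fun z => (⟨_, hmoveT xc.1 xc.2 z.1 z.2⟩ : {z : β // z ∈ T}))
       (Finite.injective_iff_bijective.1 (by
          rintro ⟨z1, hz1⟩ ⟨z2, hz2⟩ hzz
          obtain ⟨x, hx⟩ := xc
          have hz1' := (hmemT z1).1 hz1
          have hz2' := (hmemT z2).1 hz2
          have hzz' : (if x z1 < s (x z1) then x z1 else s (x z1))
              = (if x z2 < s (x z2) then x z2 else s (x z2)) := congrArg Subtype.val hzz
          apply Subtype.ext
          simp only
          split at hzz' <;> split at hzz'
          · exact x.injective hzz'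
          · exfalso
            rw [← hcomm_apply x hx z2] at hzz'
            have h12 : z1 = s z2 := x.injective hzz'
            have h21 : s z1 = z2 := by rw [h12, hss]
            have hb := hz1'.2
            rw [h21] at hb
            have ha := hz2'.2
            rw [← h12] at ha
            exact lt_asymm ha hb
          · exfalso
            rw [← hcomm_apply x hx z1] at hzz'
            have h21 : z2 = s z1 := x.injective hzz'.symm
            have h12 : s z2 = z1 := by rw [h21, hss]
            have hb := hz2'.2
            rw [h12] at hb
            have ha := hz1'.2
            rw [← h21] at ha
            exact lt_asymm ha hb
          · exact x.injective (s.injective hzz'))),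
     fun z => decide (xc.1 z.1 < s (xc.1 z.1))⟩ with hG
  have hGinj : Function.Injective G := by
    rintro ⟨x, hx⟩ ⟨x', hx'⟩ hGeq
    rw [hG, Prod.mk.injEq, Prod.mk.injEq] at hGeq
    obtain ⟨hFeq, hπeq, hεeq⟩ := hGeq
    have hfixv : ∀ z (hz : s z = z), x z = x' z := by
      intro z hz
      have := congrArg (fun (e : Perm {z : β // s z = z}) => (e ⟨z, hz⟩ : {z : β // s z = z}).1)
        hFeq
      simpa [Equiv.Perm.subtypePerm_apply] using this
    have hπv : ∀ (z : {z : β // z ∈ T}),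
        (if x z.1 < s (x z.1) then x z.1 else s (x z.1))
        = (if x' z.1 < s (x' z.1) then x' z.1 else s (x' z.1)) := by
      intro z
      have := congrArg (fun (e : Perm {z : β // z ∈ T}) => (e z : {z : β // z ∈ T}).1) hπeq
      simpa [Equiv.ofBijective_apply] using this
    have hεv : ∀ (z : {z : β // z ∈ T}), (x z.1 < s (x z.1)) ↔ (x' z.1 < s (x' z.1)) := by
      intro z
      have := congrArg (fun (e : {z : β // z ∈ T} → Bool) => e z) hεeq
      simpa [decide_eq_decide] using this
    have hTv : ∀ z, z ∈ T → x z = x' z := by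
      intro z hz
      have h1 := hπv ⟨z, hz⟩
      have h2 := hεv ⟨z, hz⟩
      simp only at h1 h2
      by_cases hc : x z < s (x z)
      · rwa [if_pos hc, if_pos (h2.1 hc)] at h1
      · rw [if_neg hc, if_neg (fun h => hc (h2.2 h))] at h1
        exact s.injective h1
    apply Subtype.ext
    ext z
    by_cases hfz : s z = z
    · exact hfixv z hfz
    · by_cases hzT : z ∈ T
      · exact hTv z hzT
      · have hszT : s z ∈ T := by
          rw [hmemT]
          constructor
          · rw [hss]; exact fun h => hfz h.symm
          · rw [hss]
            rcases lt_trichotomy z (s z) with h | h | h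
            · exact absurd ((hmemT z).2 ⟨hfz, h⟩) hzT
            · exact absurd h.symm hfz
            · exact h
        have h1 : x (s (s z)) = s (x (s z)) := hcomm_apply x hx (s z)
        have h2 : x' (s (s z)) = s (x' (s z)) := hcomm_apply x' hx' (s z)
        rw [hss] at h1 h2
        rw [h1, h2, hTv (s z) hszT]
  have hcard := Nat.card_le_card_of_injective G hGinj
  have hcardFt : Fintype.card {z : β // s z = z} = Fintype.card β - 2*j := by
    rw [Fintype.card_subtype]
    have he : Finset.filter (fun z => s z = z) Finset.univ = Finset.univ \ s.support := by
      ext z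
      simp [Perm.mem_support, not_not]
    rw [he, Finset.card_sdiff_of_subset (Finset.subset_univ _), Finset.card_univ, hsupp]
  have hcardTt : Fintype.card {z : β // z ∈ T} = j := by
    simp [hj]
  have htarget : Nat.card (Perm {z : β // s z = z} × Perm {z : β // z ∈ T}
      × ({z : β // z ∈ T} → Bool)) = 2^j * j ! * (Fintype.card β - 2*j)! := by
    rw [Nat.card_eq_fintype_card, Fintype.card_prod, Fintype.card_prod, Fintype.card_perm,
      Fintype.card_perm, Fintype.card_fun, Fintype.card_bool, hcardFt, hcardTt]
    ring
  rw [htarget] at hcard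
  exact hcard
end LO
lemma moved_swap {a b z : β} (h : Equiv.swap a b z ≠ z) : z = a ∨ z = b :=
  (Equiv.swap_apply_ne_self_iff.1 h).2

lemma star_lemma {ι : Type*} (s : ι → Perm β) (x1 x2 x3 x4 : ι)
    (h12 : x1 ≠ x2) (h13 : x1 ≠ x3) (h14 : x1 ≠ x4) (h23 : x2 ≠ x3) (h24 : x2 ≠ x4)
    (h34 : x3 ≠ x4)
    (hsw : ∀ x, IsSwap (s x)) (hinj : Function.Injective s)
    (hshare : ∀ x y, x ≠ y → ∃ z, s x z ≠ z ∧ s y z ≠ z) :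
    ∃ z, ∀ x, s x z ≠ z := by
  obtain ⟨a, b, hab, hsx1⟩ := hsw x1
  by_cases hA : ∀ x, s x a ≠ a
  · exact ⟨a, hA⟩
  push_neg at hA
  obtain ⟨y1, hy1⟩ := hA
  have hy1x1 : y1 ≠ x1 := by
    intro h
    rw [h, hsx1, Equiv.swap_apply_left] at hy1
    exact hab hy1.symm
  -- s y1 = swap b c
  obtain ⟨z, hz1, hzy⟩ := hshare x1 y1 (Ne.symm hy1x1)
  rw [hsx1] at hz1
  have hzb : z = b := by
    rcases moved_swap hz1 with h | h
    · rw [h] at hzy; exact absurd hy1 hzy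
    · exact h
  rw [hzb] at hzy
  have htmp1 : ∃ c, c ≠ b ∧ s y1 = Equiv.swap b c := by
    obtain ⟨u, v, huv, hrep⟩ := hsw y1
    rw [hrep] at hzy ⊢
    exact swap_moved huv hzy
  obtain ⟨c, hcb, hsy1⟩ := htmp1
  have hca : c ≠ a := by
    intro h
    rw [h] at hsy1
    rw [hsy1, Equiv.swap_apply_right] at hy1
    exact hab hy1.symm
  by_cases hB : ∀ x, s x b ≠ b
  · exact ⟨b, hB⟩
  push_neg at hB
  obtain ⟨y2, hy2⟩ := hB
  have hy2x1 : y2 ≠ x1 := by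
    intro h
    rw [h, hsx1, Equiv.swap_apply_right] at hy2
    exact hab hy2
  have hy2y1 : y2 ≠ y1 := by
    intro h
    rw [h, hsy1, Equiv.swap_apply_left] at hy2
    exact hcb hy2
  -- s y2 = swap a d with d = c
  obtain ⟨z', hz1', hzy'⟩ := hshare x1 y2 (Ne.symm hy2x1)
  rw [hsx1] at hz1'
  have hza : z' = a := by
    rcases moved_swap hz1' with h | h
    · exact h
    · rw [h] at hzy'; exact absurd hy2 hzy'
  rw [hza] at hzy'
  have htmp2 : ∃ d, d ≠ a ∧ s y2 = Equiv.swap a d := by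
    obtain ⟨u, v, huv, hrep⟩ := hsw y2
    rw [hrep] at hzy' ⊢
    exact swap_moved huv hzy'
  obtain ⟨d, hda, hsy2⟩ := htmp2
  have hdb : d ≠ b := by
    intro h
    rw [h] at hsy2
    rw [hsy2, Equiv.swap_apply_right] at hy2
    exact hab hy2
  have hdc : d = c := by
    obtain ⟨z'', hzy1, hzy2⟩ := hshare y1 y2 (fun h => hy2y1 h.symm)
    rw [hsy1] at hzy1
    rw [hsy2] at hzy2
    rcases moved_swap hzy1 with h | h
    · -- z'' = b, but s y2 b = b
      exfalso
      rw [h] at hzy2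
      rcases moved_swap hzy2 with h' | h'
      · exact hab h'.symm
      · exact hdb h'.symm
    · -- z'' = c ∈ {a, d}
      rw [h] at hzy2
      rcases moved_swap hzy2 with h' | h'
      · exact absurd h' hca
      · exact h'.symm
  rw [hdc] at hsy2
  -- pick a fourth index
  have ⟨w, hwx1, hwy1, hwy2⟩ : ∃ w, w ≠ x1 ∧ w ≠ y1 ∧ w ≠ y2 := by
    by_cases e2 : x2 ≠ y1 ∧ x2 ≠ y2
    · exact ⟨x2, Ne.symm h12, e2.1, e2.2⟩
    by_cases e3 : x3 ≠ y1 ∧ x3 ≠ y2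
    · exact ⟨x3, Ne.symm h13, e3.1, e3.2⟩
    by_cases e4 : x4 ≠ y1 ∧ x4 ≠ y2
    · exact ⟨x4, Ne.symm h14, e4.1, e4.2⟩
    push_neg at e2 e3 e4
    exfalso
    by_cases hx2 : x2 = y1
    · by_cases hx3 : x3 = y1
      · exact h23 (hx2.trans hx3.symm)
      · have hx3' := e3 hx3
        by_cases hx4 : x4 = y1
        · exact h24 (hx2.trans hx4.symm)
        · exact h34 ((e4 hx4) ▸ hx3' ▸ rfl)
    · have hx2' := e2 hx2
      by_cases hx3 : x3 = y2
      · exact h23 (hx2'.trans hx3.symm)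
      · have hx3' : x3 = y1 := by
          by_contra hc
          exact hx3 (e3 hc)
        by_cases hx4 : x4 = y2
        · exact h24 (hx2'.trans hx4.symm)
        · have hx4' : x4 = y1 := by
            by_contra hc
            exact hx4 (e4 hc)
          exact h34 (hx3'.trans hx4'.symm)
  obtain ⟨u, v, huv, hsw'⟩ := hsw w
  -- shared points with the triangle
  obtain ⟨p1, hp1w, hp1x⟩ := hshare w x1 hwx1
  obtain ⟨p2, hp2w, hp2y⟩ := hshare w y1 hwy1
  obtain ⟨p3, hp3w, hp3y⟩ := hshare w y2 hwy2
  rw [hsw'] at hp1w hp2w hp3w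
  rw [hsx1] at hp1x
  rw [hsy1] at hp2y
  rw [hsy2] at hp3y
  have hp1uv := moved_swap hp1w
  have hp2uv := moved_swap hp2w
  have hp3uv := moved_swap hp3w
  have hp1ab := moved_swap hp1x
  have hp2bc := moved_swap hp2y
  have hp3ac := moved_swap hp3y
  have hbc : b ≠ c := Ne.symm hcb
  have hac : a ≠ c := Ne.symm hca
  exfalso
  have hu3 : u = a ∨ u = b ∨ u = c := by
    by_contra hu
    push_neg at hu
    obtain ⟨hua, hub, huc⟩ := hu
    have hv1 : v = a ∨ v = b := by
      rcases hp1uv with h | h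
      · rcases hp1ab with h' | h'
        · exact absurd (h.symm.trans h') hua
        · exact absurd (h.symm.trans h') hub
      · rcases hp1ab with h' | h'
        · exact Or.inl (h.symm.trans h')
        · exact Or.inr (h.symm.trans h')
    have hv2 : v = b ∨ v = c := by
      rcases hp2uv with h | h
      · rcases hp2bc with h' | h'
        · exact absurd (h.symm.trans h') hub
        · exact absurd (h.symm.trans h') huc
      · rcases hp2bc with h' | h'
        · exact Or.inl (h.symm.trans h')
        · exact Or.inr (h.symm.trans h')
    rcases hv1 with rfl | rfl
    · rcases hv2 with h | h
      · exact hab h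
      · exact hac h
    · rcases hp3uv with h | h
      · rcases hp3ac with h' | h'
        · exact hua (h.symm.trans h')
        · exact huc (h.symm.trans h')
      · rcases hp3ac with h' | h'
        · exact hab (h.symm.trans h').symm
        · exact hbc (h.symm.trans h')
  have hv3 : v = a ∨ v = b ∨ v = c := by
    by_contra hv
    push_neg at hv
    obtain ⟨hva, hvb, hvc⟩ := hv
    have hu1 : u = a ∨ u = b := by
      rcases hp1uv with h | h
      · rcases hp1ab with h' | h'
        · exact Or.inl (h.symm.trans h')
        · exact Or.inr (h.symm.trans h')
      · rcases hp1ab with h' | h'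
        · exact absurd (h.symm.trans h') hva
        · exact absurd (h.symm.trans h') hvb
    have hu2 : u = b ∨ u = c := by
      rcases hp2uv with h | h
      · rcases hp2bc with h' | h'
        · exact Or.inl (h.symm.trans h')
        · exact Or.inr (h.symm.trans h')
      · rcases hp2bc with h' | h'
        · exact absurd (h.symm.trans h') hvb
        · exact absurd (h.symm.trans h') hvc
    rcases hu1 with rfl | rfl
    · rcases hu2 with h | h
      · exact hab h
      · exact hac h
    · rcases hp3uv with h | h
      · rcases hp3ac with h' | h'
        · exact hab (h.symm.trans h').symm
        · exact hbc (h.symm.trans h')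
      · rcases hp3ac with h' | h'
        · exact hva (h.symm.trans h')
        · exact hvc (h.symm.trans h')
  rcases hu3 with hu | hu | hu <;> rcases hv3 with hv | hv | hv
  · exact huv (hu.trans hv.symm)
  · rw [hu, hv] at hsw'
    exact hwx1 (hinj (hsw'.trans hsx1.symm))
  · rw [hu, hv] at hsw'
    exact hwy2 (hinj (hsw'.trans hsy2.symm))
  · rw [hu, hv, Equiv.swap_comm b a] at hsw'
    exact hwx1 (hinj (hsw'.trans hsx1.symm))
  · exact huv (hu.trans hv.symm)
  · rw [hu, hv] at hsw'
    exact hwy1 (hinj (hsw'.trans hsy1.symm))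
  · rw [hu, hv, Equiv.swap_comm c a] at hsw'
    exact hwy2 (hinj (hsw'.trans hsy2.symm))
  · rw [hu, hv, Equiv.swap_comm c b] at hsw'
    exact hwy1 (hinj (hsw'.trans hsy1.symm))
  · exact huv (hu.trans hv.symm)


lemma isSwap_map {N : ℕ} (h5 : 5 ≤ N) (h6 : N ≠ 6) (Φ : Perm (Fin N) →* Perm (Fin N))
    (hbij : Function.Bijective Φ) {t : Perm (Fin N)} (ht : IsSwap t) : IsSwap (Φ t) := by
  obtain ⟨a, b, hab, rfl⟩ := ht
  by_contra hsw
  have hs2 : Φ (Equiv.swap a b) * Φ (Equiv.swap a b) = 1 := by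
    rw [← map_mul, Equiv.swap_mul_self, map_one]
  have hs1 : Φ (Equiv.swap a b) ≠ 1 := by
    intro h
    have h1 : Φ (Equiv.swap a b) = Φ 1 := by rw [h, map_one]
    have h2 := hbij.1 h1
    have h3 := congrArg (fun e : Perm (Fin N) => e a) h2
    simp only [Equiv.swap_apply_left, Perm.one_apply] at h3
    exact hab h3.symm
  obtain ⟨j, hj2, hjn, hup⟩ := card_commute_invol_le (Φ (Equiv.swap a b)) hs2 hs1 hsw
  have hlow := card_commute_swap_ge a b hab
  have hmap : Nat.card {x : Perm (Fin N) // Commute x (Equiv.swap a b)}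
      ≤ Nat.card {x : Perm (Fin N) // Commute x (Φ (Equiv.swap a b))} := by
    apply Nat.card_le_card_of_injective (fun x => ⟨Φ x.1, x.2.map Φ⟩)
    rintro ⟨x, hx⟩ ⟨y, hy⟩ h
    exact Subtype.ext (hbij.1 (congrArg Subtype.val h))
  rw [Fintype.card_fin] at hjn hup hlow
  have harith := lt_arith N j hj2 hjn h5 h6
  linarith

lemma exists_conj {N : ℕ} (h5 : 5 ≤ N) (h6 : N ≠ 6) (Φ : Perm (Fin N) →* Perm (Fin N))
    (hbij : Function.Bijective Φ) :
    ∃ σ : Perm (Fin N), ∀ g, Φ g = σ * g * σ⁻¹ := by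
  have hN0 : 0 < N := by omega
  set x0 : Fin N := ⟨0, hN0⟩ with hx0
  set s : {x : Fin N // x ≠ x0} → Perm (Fin N) := fun x => Φ (Equiv.swap x0 x.1) with hs
  have hsw : ∀ x, IsSwap (s x) := fun x =>
    isSwap_map h5 h6 Φ hbij ⟨x0, x.1, Ne.symm x.2, rfl⟩
  have hinj : Function.Injective s := by
    intro x y h
    have h2 := hbij.1 h
    rcases swap_eq_cases (Ne.symm x.2) h2 with ⟨_, h3⟩ | ⟨h3, h4⟩
    · exact Subtype.ext h3
    · exact absurd h4 x.2
  have hshare : ∀ x y, x ≠ y → ∃ z, s x z ≠ z ∧ s y z ≠ z := by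
    intro x y hxy
    apply noncomm_share
    intro hC
    have hxy1 : x.1 ≠ y.1 := fun h => hxy (Subtype.ext h)
    have hC' : Equiv.swap x0 x.1 * Equiv.swap x0 y.1
        = Equiv.swap x0 y.1 * Equiv.swap x0 x.1 := by
      apply hbij.1
      rw [map_mul, map_mul]
      exact hC.eq
    have h1 := congrArg (fun e : Perm (Fin N) => e y.1) hC'
    simp only [Perm.mul_apply] at h1
    rw [Equiv.swap_apply_right, Equiv.swap_apply_left,
      Equiv.swap_apply_of_ne_of_ne y.2 (Ne.symm hxy1), Equiv.swap_apply_right] at h1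
    exact x.2 h1
  -- four distinct indices
  have he1 : (⟨1, by omega⟩ : Fin N) ≠ x0 := by simp [hx0, Fin.ext_iff]
  have he2 : (⟨2, by omega⟩ : Fin N) ≠ x0 := by simp [hx0, Fin.ext_iff]
  have he3 : (⟨3, by omega⟩ : Fin N) ≠ x0 := by simp [hx0, Fin.ext_iff]
  have he4 : (⟨4, by omega⟩ : Fin N) ≠ x0 := by simp [hx0, Fin.ext_iff]
  obtain ⟨z, hz⟩ := star_lemma s ⟨_, he1⟩ ⟨_, he2⟩ ⟨_, he3⟩ ⟨_, he4⟩
    (by simp [Subtype.ext_iff, Fin.ext_iff]) (by simp [Subtype.ext_iff, Fin.ext_iff])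
    (by simp [Subtype.ext_iff, Fin.ext_iff]) (by simp [Subtype.ext_iff, Fin.ext_iff])
    (by simp [Subtype.ext_iff, Fin.ext_iff]) (by simp [Subtype.ext_iff, Fin.ext_iff])
    hsw hinj hshare
  have hrep : ∀ x, ∃ w, w ≠ z ∧ s x = Equiv.swap z w := by
    intro x
    obtain ⟨u, v, huv, hx⟩ := hsw x
    have hmov := hz x
    rw [hx] at hmov ⊢
    exact swap_moved huv hmov
  choose w hwz hwrep using hrep
  set F : Fin N → Fin N := fun y => if h : y = x0 then z else w ⟨y, h⟩ with hF
  have hFinj : Function.Injective F := by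
    intro y1 y2 h
    rw [hF] at h
    simp only at h
    split at h <;> split at h
    · next h1 h2 => rw [h1, h2]
    · next h1 h2 => exact absurd h.symm (hwz ⟨y2, h2⟩)
    · next h1 h2 => exact absurd h (hwz ⟨y1, h1⟩)
    · next h1 h2 =>
      have hss : s ⟨y1, h1⟩ = s ⟨y2, h2⟩ := by rw [hwrep, hwrep, h]
      have := hinj hss
      exact congrArg Subtype.val this
  set σ : Perm (Fin N) := Equiv.ofBijective F (Finite.injective_iff_bijective.1 hFinj) with hσ
  have hσap : ∀ y, σ y = F y := fun y => rfl
  have hσ0 : σ x0 = z := by rw [hσap, hF]; simp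
  have hσw : ∀ (x : {x : Fin N // x ≠ x0}), σ x.1 = w x := by
    intro x
    rw [hσap, hF]
    simp only [dif_neg x.2]
  have hA : ∀ (x : {x : Fin N // x ≠ x0}),
      Φ (Equiv.swap x0 x.1) = σ * Equiv.swap x0 x.1 * σ⁻¹ := by
    intro x
    rw [← swap_apply_apply σ x0 x.1, hσ0, hσw]
    exact hwrep x
  have hswaps : ∀ g : Perm (Fin N), IsSwap g → Φ g = σ * g * σ⁻¹ := by
    rintro g ⟨c, d, hcd, rfl⟩
    rcases eq_or_ne c x0 with hcx | hc
    · rw [hcx]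
      exact hA ⟨d, fun h => hcd (hcx.trans h.symm)⟩
    rcases eq_or_ne d x0 with hdx | hd
    · rw [hdx, Equiv.swap_comm c x0]
      exact hA ⟨c, fun h => hcd (h.trans hdx.symm)⟩
    · have key : Equiv.swap c d
          = Equiv.swap x0 c * Equiv.swap x0 d * (Equiv.swap x0 c)⁻¹ := by
        have h1 : Equiv.swap c d
            = Equiv.swap ((Equiv.swap x0 c) x0) ((Equiv.swap x0 c) d) := by
          rw [Equiv.swap_apply_left, Equiv.swap_apply_of_ne_of_ne hd (fun h => hcd h.symm)]
        rw [h1, swap_apply_apply]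
      rw [key, map_mul, map_mul, map_inv, hA ⟨c, hc⟩, hA ⟨d, hd⟩]
      group
  refine ⟨σ, ?_⟩
  intro g
  have hgen : Φ = (MulAut.conj σ).toMonoidHom := by
    apply MonoidHom.eq_of_eqOn_dense Equiv.Perm.closure_isSwap
    intro g hg
    rw [MulEquiv.coe_toMonoidHom]
    rw [hswaps g hg]
    rfl
  rw [hgen]
  rfl

end Stmt9Aux

open Equiv Equiv.Perm Stmt9Aux in
/-- Let `2 ≤ m ≤ n`, `n ≥ 5`, `(m,n) ≠ (6,6)`, and let `H ≤ S_m × S_n` have both projections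
surjective and act transitively on the product. For distinct `i, k` let
`H₁ = {h ∈ H : π₁(h)` fixes `i` and `k}`. Then `π₂(H₁)` is `A_n` or `S_n`; in particular it
acts doubly transitively on `{0,…,n-1}`. -/
theorem stmt9 (m n : ℕ) (hm : 2 ≤ m) (hmn : m ≤ n) (hn : 5 ≤ n)
    (hmn6 : ¬ (m = 6 ∧ n = 6))
    (H : Subgroup (Equiv.Perm (Fin m) × Equiv.Perm (Fin n)))
    (h1 : Subgroup.map (MonoidHom.fst (Equiv.Perm (Fin m)) (Equiv.Perm (Fin n))) H = ⊤)
    (h2 : Subgroup.map (MonoidHom.snd (Equiv.Perm (Fin m)) (Equiv.Perm (Fin n))) H = ⊤)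
    (htr : ∀ p q : Fin m × Fin n, ∃ h ∈ H, (h.1 p.1, h.2 p.2) = q)
    (i k : Fin m) (hik : i ≠ k)
    (H1 : Subgroup (Equiv.Perm (Fin m) × Equiv.Perm (Fin n)))
    (hH1 : ∀ h, h ∈ H1 ↔ h ∈ H ∧ h.1 i = i ∧ h.1 k = k) :
    (Subgroup.map (MonoidHom.snd (Equiv.Perm (Fin m)) (Equiv.Perm (Fin n))) H1
        = alternatingGroup (Fin n) ∨
      Subgroup.map (MonoidHom.snd (Equiv.Perm (Fin m)) (Equiv.Perm (Fin n))) H1 = ⊤) ∧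
    (∀ a b c d : Fin n, a ≠ b → c ≠ d →
      ∃ x ∈ Subgroup.map (MonoidHom.snd (Equiv.Perm (Fin m)) (Equiv.Perm (Fin n))) H1,
        x a = c ∧ x b = d) := by
  have h5card : 5 ≤ Fintype.card (Fin n) := by rw [Fintype.card_fin]; exact hn
  -- surjectivity of the projections, elementwise
  have hex1 : ∀ g : Perm (Fin m), ∃ σ, (g, σ) ∈ H := by
    intro g
    have : g ∈ Subgroup.map (MonoidHom.fst (Perm (Fin m)) (Perm (Fin n))) H := by
      rw [h1]; trivial
    obtain ⟨x, hxH, hx⟩ := this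
    refine ⟨x.2, ?_⟩
    have hx1 : x.1 = g := hx
    rw [← hx1, Prod.mk.eta]
    exact hxH
  have hex2 : ∀ τ : Perm (Fin n), ∃ g, (g, τ) ∈ H := by
    intro τ
    have : τ ∈ Subgroup.map (MonoidHom.snd (Perm (Fin m)) (Perm (Fin n))) H := by
      rw [h2]; trivial
    obtain ⟨x, hxH, hx⟩ := this
    refine ⟨x.1, ?_⟩
    have hx2 : x.2 = τ := hx
    rw [← hx2, Prod.mk.eta]
    exact hxH
  by_cases hK : ∃ σ : Perm (Fin n), σ ≠ 1 ∧ ((1 : Perm (Fin m)), σ) ∈ H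
  · -- the kernel subgroup is nontrivial, hence contains the alternating group
    obtain ⟨σ0, hσ0ne, hσ0H⟩ := hK
    set K' : Subgroup (Perm (Fin n)) :=
      { carrier := {σ | ((1 : Perm (Fin m)), σ) ∈ H}
        mul_mem' := fun {σ} {τ} hσ hτ => by
          have := H.mul_mem hσ hτ
          simpa [Prod.mk_mul_mk] using this
        one_mem' := H.one_mem
        inv_mem' := fun {σ} hσ => by
          have := H.inv_mem hσ
          simpa [Prod.inv_mk] using this } with hK'
    have hσ0K : σ0 ∈ K' := hσ0H
    have hconj : ∀ σ ∈ K', ∀ τ : Perm (Fin n), τ * σ * τ⁻¹ ∈ K' := by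
      intro σ hσ τ
      obtain ⟨g, hgH⟩ := hex2 τ
      have hmem := mul_mem (mul_mem hgH hσ) (inv_mem hgH)
      have heq : (g, τ) * (1, σ) * (g, τ)⁻¹ = ((1 : Perm (Fin m)), τ * σ * τ⁻¹) := by
        simp [Prod.mk_mul_mk, Prod.inv_mk, mul_assoc]
      rwa [heq] at hmem
    have hKle : alternatingGroup (Fin n) ≤ K' :=
      alternating_le_of_normal h5card K' hconj hσ0K hσ0ne
    have hMle : alternatingGroup (Fin n)
        ≤ Subgroup.map (MonoidHom.snd (Perm (Fin m)) (Perm (Fin n))) H1 := by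
      intro σ hσ
      have hσH : ((1 : Perm (Fin m)), σ) ∈ H := hKle hσ
      have hσH1 : ((1 : Perm (Fin m)), σ) ∈ H1 := by
        rw [hH1]
        exact ⟨hσH, rfl, rfl⟩
      exact ⟨((1 : Perm (Fin m)), σ), hσH1, rfl⟩
    constructor
    · exact eq_alt_or_top _ hMle
    · intro a b c d hab hcd
      obtain ⟨x, hxalt, hxa, hxb⟩ := exists_even_map h5card a b c d hab hcd
      exact ⟨x, hMle hxalt, hxa, hxb⟩
  · -- the kernel is trivial: H is the graph of an isomorphism; contradiction
    exfalso
    push_neg at hK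
    have huniq : ∀ (g : Perm (Fin m)) (σ τ : Perm (Fin n)), (g, σ) ∈ H → (g, τ) ∈ H → σ = τ := by
      intro g σ τ hσ hτ
      have hmem := mul_mem (inv_mem hσ) hτ
      have heq : (g, σ)⁻¹ * (g, τ) = ((1 : Perm (Fin m)), σ⁻¹ * τ) := by
        simp [Prod.inv_mk, Prod.mk_mul_mk]
      rw [heq] at hmem
      have : σ⁻¹ * τ = 1 := by
        by_contra hne
        exact hK _ hne hmem
      exact inv_mul_eq_one.1 this
    set Φf : Perm (Fin m) → Perm (Fin n) := fun g => (hex1 g).choose with hΦf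
    have hΦmem : ∀ g, (g, Φf g) ∈ H := fun g => (hex1 g).choose_spec
    set Φ : Perm (Fin m) →* Perm (Fin n) :=
      { toFun := Φf
        map_one' := huniq 1 _ _ (hΦmem 1) H.one_mem
        map_mul' := fun g g' => by
          apply huniq (g * g') _ _ (hΦmem _)
          have := mul_mem (hΦmem g) (hΦmem g')
          simpa [Prod.mk_mul_mk] using this } with hΦ
    have hsurj : Function.Surjective Φ := by
      intro τ
      obtain ⟨g, hg⟩ := hex2 τ
      exact ⟨g, huniq g _ _ (hΦmem g) hg⟩
    have hnm : n ≤ m := by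
      by_contra hlt
      push_neg at hlt
      have hcard := Fintype.card_le_of_surjective Φ hsurj
      rw [Fintype.card_perm, Fintype.card_perm, Fintype.card_fin, Fintype.card_fin] at hcard
      have := (Nat.factorial_lt (by omega : 0 < m)).2 hlt
      omega
    have hmn' : m = n := le_antisymm hmn hnm
    subst hmn'
    have h6 : m ≠ 6 := fun h => hmn6 ⟨h, h⟩
    have hbij : Function.Bijective Φ := ⟨Finite.injective_iff_surjective.2 hsurj, hsurj⟩
    obtain ⟨σ, hσ⟩ := exists_conj (by omega : 5 ≤ m) h6 Φ hbij
    haveI hnt : Nontrivial (Fin m) :=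
      ⟨⟨⟨0, by omega⟩, ⟨1, by omega⟩, by simp [Fin.ext_iff]⟩⟩
    obtain ⟨b, hb⟩ := exists_ne (σ i)
    obtain ⟨h, hhH, hheq⟩ := htr (i, σ i) (i, b)
    rw [Prod.mk.injEq] at hheq
    have hΦh : Φ h.1 = h.2 := huniq h.1 _ _ (hΦmem h.1) (by rwa [Prod.mk.eta])
    have hfix : h.2 (σ i) = σ i := by
      rw [← hΦh, hσ h.1]
      rw [Perm.mul_apply, Perm.mul_apply, Equiv.Perm.inv_def, Equiv.symm_apply_apply, hheq.1]
    exact hb (hheq.2.symm.trans hfix)
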